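/- arXiv:1809.07718 — 2 statements merged into one kernel-verified Lean document; each statement's English description precedes it below -/
import Mathlib

section
/- For the cactus C^c with k ≥ 2 triangles, α + 1 is an eigenvalue of A_α(C^c) with multiplicity at least k−1, witnessed by vectors assigning value 1 to both vertices v_1, v_1' of one triangle, −1 to both vertices of another triangle, and 0 elsewhere. -/
open Matrix

open scoped Classical

/-- The `A_α` matrix of a graph: `A_α(G) = α·D(G) + (1-α)·A(G)`. -/
noncomputable def Aalpha {V : Type*} [Fintype V] [DecidableEq V] (G : SimpleGraph V)
    [DecidableRel G.Adj] (α : ℝ) : Matrix V V ℝ :=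
  α • Matrix.diagonal (fun v => (G.degree v : ℝ)) + (1 - α) • G.adjMatrix ℝ

/-- Vertices of the cactus `C^c`. -/
abbrev cactusV (k t : ℕ) := Unit ⊕ (Fin k ⊕ Fin k) ⊕ Fin t

/-- The cactus `C^c`: a center joined to `k` triangles `v v_i v_i'` and `t` pendant
vertices `u_j`. -/
def cactus (k t : ℕ) : SimpleGraph (cactusV k t) :=
  SimpleGraph.fromRel (fun a b =>
    (a = Sum.inl () ∧ b ≠ Sum.inl ()) ∨
    (∃ i : Fin k, a = Sum.inr (Sum.inl (Sum.inl i)) ∧ b = Sum.inr (Sum.inl (Sum.inr i))))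

lemma cactus_adj {k t : ℕ} (a b : cactusV k t) :
    (cactus k t).Adj a b ↔ a ≠ b ∧
      ((a = Sum.inl () ∧ b ≠ Sum.inl ()) ∨ (b = Sum.inl () ∧ a ≠ Sum.inl ()) ∨
       (∃ i : Fin k, a = Sum.inr (Sum.inl (Sum.inl i)) ∧ b = Sum.inr (Sum.inl (Sum.inr i))) ∨
       (∃ i : Fin k, b = Sum.inr (Sum.inl (Sum.inl i)) ∧ a = Sum.inr (Sum.inl (Sum.inr i)))) := by
  rw [cactus, SimpleGraph.fromRel_adj]
  aesop

lemma nbrL {k t : ℕ} (j : Fin k) :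
    (cactus k t).neighborFinset (Sum.inr (Sum.inl (Sum.inl j))) =
      {Sum.inl (), Sum.inr (Sum.inl (Sum.inr j))} := by
  ext x
  simp only [SimpleGraph.mem_neighborFinset, cactus_adj, Finset.mem_insert, Finset.mem_singleton]
  constructor
  · rintro ⟨hne, h | h | ⟨i, hi1, hi2⟩ | ⟨i, hi1, hi2⟩⟩ <;> simp_all
  · rintro (rfl | rfl) <;> simp

lemma nbrR {k t : ℕ} (j : Fin k) :
    (cactus k t).neighborFinset (Sum.inr (Sum.inl (Sum.inr j))) =
      {Sum.inl (), Sum.inr (Sum.inl (Sum.inl j))} := by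
  ext x
  simp only [SimpleGraph.mem_neighborFinset, cactus_adj, Finset.mem_insert, Finset.mem_singleton]
  constructor
  · rintro ⟨hne, h | h | ⟨i, hi1, hi2⟩ | ⟨i, hi1, hi2⟩⟩ <;> simp_all
  · rintro (rfl | rfl) <;> simp

lemma degL {k t : ℕ} (j : Fin k) :
    (cactus k t).degree (Sum.inr (Sum.inl (Sum.inl j))) = 2 := by
  rw [SimpleGraph.degree, nbrL,
    Finset.card_insert_of_notMem (by simp), Finset.card_singleton]

lemma degR {k t : ℕ} (j : Fin k) :
    (cactus k t).degree (Sum.inr (Sum.inl (Sum.inr j))) = 2 := by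
  rw [SimpleGraph.degree, nbrR,
    Finset.card_insert_of_notMem (by simp), Finset.card_singleton]

lemma Aalpha_apply {V : Type*} [Fintype V] [DecidableEq V] (G : SimpleGraph V)
    [DecidableRel G.Adj] (α : ℝ) (f : V → ℝ) (x : V) :
    (Aalpha G α).mulVec f x
      = α * G.degree x * f x + (1 - α) * ((G.adjMatrix ℝ).mulVec f x) := by
  simp [Aalpha, Matrix.add_mulVec, Matrix.smul_mulVec, Matrix.mulVec_diagonal,
    mul_assoc]

/-- For `k ≥ 2`, `α + 1` is an eigenvalue of `A_α(C^c)` with multiplicity at least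
`k-1`, witnessed by vectors assigning `1` to both vertices of one triangle, `-1` to
both vertices of another triangle, and `0` elsewhere; the corresponding `k-1`
eigenvectors are linearly independent. -/
theorem stmt_11 (k t : ℕ) (hk : 2 ≤ k) (α : ℝ)
    (Z : Fin k → Fin k → cactusV k t → ℝ)
    (hZ : ∀ i₁ i₂ : Fin k, Z i₁ i₂ = fun x =>
      if x = Sum.inr (Sum.inl (Sum.inl i₁)) ∨ x = Sum.inr (Sum.inl (Sum.inr i₁)) then (1 : ℝ)
      else if x = Sum.inr (Sum.inl (Sum.inl i₂)) ∨ x = Sum.inr (Sum.inl (Sum.inr i₂))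
        then (-1 : ℝ) else 0) :
    (∀ i₁ i₂ : Fin k, i₁ ≠ i₂ →
      (Aalpha (cactus k t) α).mulVec (Z i₁ i₂) = (α + 1) • Z i₁ i₂) ∧
    LinearIndependent ℝ
      (fun i : Fin (k - 1) => Z ⟨0, by omega⟩ ⟨i.val + 1, by omega⟩) := by
  constructor
  · intro i₁ i₂ hne
    have hZ4 : Z i₁ i₂ = fun y =>
        (if y = Sum.inr (Sum.inl (Sum.inl i₁)) then (1:ℝ) else 0)
        + (if y = Sum.inr (Sum.inl (Sum.inr i₁)) then 1 else 0)
        - (if y = Sum.inr (Sum.inl (Sum.inl i₂)) then 1 else 0)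
        - (if y = Sum.inr (Sum.inl (Sum.inr i₂)) then 1 else 0) := by
      rw [hZ]; funext y; split_ifs <;> simp_all
    have key : ∀ x, ((cactus k t).adjMatrix ℝ).mulVec (Z i₁ i₂) x =
        (if (cactus k t).Adj x (Sum.inr (Sum.inl (Sum.inl i₁))) then (1:ℝ) else 0)
        + (if (cactus k t).Adj x (Sum.inr (Sum.inl (Sum.inr i₁))) then 1 else 0)
        - (if (cactus k t).Adj x (Sum.inr (Sum.inl (Sum.inl i₂))) then 1 else 0)
        - (if (cactus k t).Adj x (Sum.inr (Sum.inl (Sum.inr i₂))) then 1 else 0) := by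
      intro x
      rw [hZ4]
      simp only [Matrix.mulVec, dotProduct, SimpleGraph.adjMatrix_apply,
        mul_add, mul_sub, mul_ite, mul_one, mul_zero, Finset.sum_add_distrib,
        Finset.sum_sub_distrib, ite_and]
      simp [Finset.sum_ite_eq']
    have hne' : i₂ ≠ i₁ := Ne.symm hne
    funext x
    rw [Aalpha_apply, key, Pi.smul_apply, smul_eq_mul]
    clear key hZ4
    rcases x with u | ((j | j) | j)
    · rw [hZ]
      simp [cactus_adj]
    · rw [degL, hZ]
      simp only [cactus_adj, Sum.inr.injEq, Sum.inl.injEq]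
      clear hZ
      by_cases h1 : j = i₁ <;> by_cases h2 : j = i₂ <;>
        simp_all [eq_comm] <;> ring
    · rw [degR, hZ]
      simp only [cactus_adj, Sum.inr.injEq, Sum.inl.injEq]
      clear hZ
      by_cases h1 : j = i₁ <;> by_cases h2 : j = i₂ <;>
        simp_all [eq_comm] <;> ring
    · rw [hZ]
      simp [cactus_adj]
  · rw [Fintype.linearIndependent_iff]
    intro g hg i
    have h := congrFun hg (Sum.inr (Sum.inl (Sum.inl ⟨i.val + 1, by omega⟩)))
    rw [Finset.sum_apply] at h
    simp only [Pi.smul_apply, smul_eq_mul, hZ] at h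
    rw [Finset.sum_eq_single i] at h
    · simp only [Sum.inr.injEq, Sum.inl.injEq, Fin.mk.injEq] at h
      simp only [show ¬(i.val + 1 = 0) by omega, or_false, if_false, if_true, reduceIte] at h
      simpa using h
    · intro b _ hbi
      have : ¬((⟨i.val+1, by omega⟩ : Fin k) = ⟨0, by omega⟩) := by
        simp [Fin.ext_iff]
      simp only [Sum.inr.injEq, Sum.inl.injEq, Fin.mk.injEq]
      have hb : ¬(i.val + 1 = b.val + 1) := by
        simp [Fin.ext_iff] at hbi ⊢
        omega
      simp [show ¬(i.val + 1 = 0) by omega, hb, show ¬(i.val = b.val) by omega]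
    · simp
end

section
/- Let G be a connected graph with α ∈ [0,1), let X be a nonnegative eigenvector of A_α(G) for its largest eigenvalue ρ(G), let v, w be distinct nonadjacent-or-adjacent vertices and S a nonempty set of vertices with S ⊆ N(v) \ (N(w) ∪ {w}), and let H be obtained from G by deleting the edges {uv : u ∈ S} and adding the edges {uw : u ∈ S}. If x_w ≥ x_v, then ρ(H) > ρ(G). -/
open Matrix Finset
lemma rayleigh_le {V : Type*} [Fintype V] [DecidableEq V] [Nonempty V]
    {M : Matrix V V ℝ} (hM : M.IsHermitian) (y : V → ℝ) :
    y ⬝ᵥ (M *ᵥ y) ≤ (⨆ i, hM.eigenvalues i) * (y ⬝ᵥ y) := by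
  set U : Matrix V V ℝ := (hM.eigenvectorUnitary : Matrix V V ℝ) with hU
  set z : V → ℝ := star U *ᵥ y with hz
  have hys : y ᵥ* U = z := by
    rw [hz, ← mulVec_transpose, ← conjTranspose_eq_transpose_of_trivial]
    rfl
  have hspec := hM.spectral_theorem
  have hofr : (RCLike.ofReal ∘ hM.eigenvalues : V → ℝ) = hM.eigenvalues := by
    funext i; simp [RCLike.ofReal]
  have h1 : y ⬝ᵥ (M *ᵥ y) = z ⬝ᵥ (diagonal hM.eigenvalues *ᵥ z) := by
    conv_lhs => rw [hspec]
    rw [hofr, Unitary.conjStarAlgAut_apply, ← mulVec_mulVec, ← mulVec_mulVec, dotProduct_mulVec, hys, hz]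
  have hUU : U * star U = 1 := (Matrix.mem_unitaryGroup_iff).mp hM.eigenvectorUnitary.2
  have h2 : z ⬝ᵥ z = y ⬝ᵥ y := by
    have hstt : (star U)ᵀ = U := by
      rw [show star U = Uᴴ from rfl, conjTranspose_eq_transpose_of_trivial, transpose_transpose]
    rw [hz, dotProduct_mulVec, ← mulVec_transpose, mulVec_mulVec, hstt, hUU, one_mulVec]
  have hbdd : BddAbove (Set.range hM.eigenvalues) := (Set.finite_range _).bddAbove
  have hle : ∀ i, hM.eigenvalues i ≤ ⨆ i, hM.eigenvalues i := fun i => le_ciSup hbdd i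
  calc y ⬝ᵥ (M *ᵥ y) = ∑ i, hM.eigenvalues i * (z i * z i) := by
        rw [h1]; simp [dotProduct, mulVec_diagonal]; ring_nf
        simp [mul_comm, pow_two]
    _ ≤ ∑ i, (⨆ i, hM.eigenvalues i) * (z i * z i) := by
        apply Finset.sum_le_sum
        intro i _
        exact mul_le_mul_of_nonneg_right (hle i) (mul_self_nonneg _)
    _ = (⨆ i, hM.eigenvalues i) * (y ⬝ᵥ y) := by
        rw [← h2]; simp [dotProduct, Finset.mul_sum]

lemma aalpha_apply {V : Type*} [Fintype V] [DecidableEq V] (G : SimpleGraph V)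
    [DecidableRel G.Adj] (α : ℝ) (X : V → ℝ) (u : V) :
    (Aalpha G α *ᵥ X) u
      = α * (G.degree u : ℝ) * X u + (1 - α) * ∑ t ∈ G.neighborFinset u, X t := by
  simp [Aalpha, add_mulVec, smul_mulVec, mulVec_diagonal,
    SimpleGraph.adjMatrix_mulVec_apply, mul_assoc]
lemma perron_pos {V : Type*} [Fintype V] [DecidableEq V] (G : SimpleGraph V)
    [DecidableRel G.Adj] (α : ℝ) (hα1 : α < 1) (hconn : G.Connected)
    (X : V → ℝ) (hXnonneg : ∀ u, 0 ≤ X u) (hXunit : X ⬝ᵥ X = 1)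
    (ρ : ℝ) (hEig : Aalpha G α *ᵥ X = ρ • X) : ∀ u, 0 < X u := by
  -- some coordinate is positive
  have hex : ∃ u0, 0 < X u0 := by
    by_contra h
    push_neg at h
    have hz : ∀ u, X u = 0 := fun u => le_antisymm (h u) (hXnonneg u)
    rw [dotProduct] at hXunit
    simp [hz] at hXunit
  obtain ⟨u0, hu0⟩ := hex
  -- positivity propagates along edges
  have hstep : ∀ a b : V, G.Adj a b → 0 < X a → 0 < X b := by
    intro a b hab ha
    rcases lt_or_eq_of_le (hXnonneg b) with h | h
    · exact h
    · exfalso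
      have heq := congrFun hEig b
      rw [aalpha_apply] at heq
      simp only [Pi.smul_apply, smul_eq_mul, ← h] at heq
      have hmul : (1 - α) * ∑ t ∈ G.neighborFinset b, X t = 0 := by linarith
      have hsum : ∑ t ∈ G.neighborFinset b, X t = 0 := by
        rcases mul_eq_zero.mp hmul with h' | h'
        · exact absurd h' (by linarith)
        · exact h'
      have := (Finset.sum_eq_zero_iff_of_nonneg (fun t _ => hXnonneg t)).mp hsum a
        ((SimpleGraph.mem_neighborFinset G b a).mpr hab.symm)
      rw [this] at ha; exact lt_irrefl 0 ha
  -- propagate along walks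
  intro u
  obtain ⟨p⟩ := hconn.preconnected u0 u
  clear hXunit hEig
  induction p with
  | nil => exact hu0
  | cons h q ih => exact ih (hstep _ _ h hu0)
lemma perturb_ineq (ρ Q c δ d t xw : ℝ) (hQ : ρ ≤ Q) (hδ : δ = c - ρ * xw)
    (hδpos : 0 < δ) (ht0 : 0 < t) (ht1 : t * (1 + |d - ρ|) ≤ δ) :
    ρ * (1 + 2 * t * xw + t ^ 2) < Q + 2 * t * c + t ^ 2 * d := by
  have h4 : t ^ 2 * (-(|d - ρ|)) ≤ t ^ 2 * (d - ρ) :=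
    mul_le_mul_of_nonneg_left (neg_abs_le _) (sq_nonneg t)
  have h5 : t * (t * (1 + |d - ρ|)) ≤ t * δ :=
    mul_le_mul_of_nonneg_left ht1 ht0.le
  nlinarith [mul_pos ht0 hδpos, sq_nonneg t]

lemma yy_pos (t xw : ℝ) (ht : 0 < t) (hx : 0 < xw) :
    (0:ℝ) < 1 + 2 * t * xw + t ^ 2 := by nlinarith

/-- Edge-rotation lemma: if `X ≥ 0` is an eigenvector of `A_α(G)` for the largest
eigenvalue, `∅ ≠ S ⊆ N(v) \ (N(w) ∪ {w})`, `H` is obtained from `G` by replacing the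
edges `uv` (`u ∈ S`) by `uw`, and `x_w ≥ x_v`, then `ρ(H) > ρ(G)`. -/
theorem stmt_13 {V : Type*} [Fintype V] [DecidableEq V]
    (G H : SimpleGraph V) [DecidableRel G.Adj] [DecidableRel H.Adj]
    (α : ℝ) (hα : α ∈ Set.Ico (0 : ℝ) 1) (hconn : G.Connected)
    (v w : V) (hvw : v ≠ w) (S : Finset V) (hS : S.Nonempty)
    (hSsub : ∀ u ∈ S, G.Adj v u ∧ ¬ G.Adj w u ∧ u ≠ w)
    (hH : ∀ a b : V, H.Adj a b ↔
      ((G.Adj a b ∧ ¬ (a = v ∧ b ∈ S) ∧ ¬ (b = v ∧ a ∈ S)) ∨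
        (a = w ∧ b ∈ S) ∨ (b = w ∧ a ∈ S)))
    (hGh : (Aalpha G α).IsHermitian) (hHh : (Aalpha H α).IsHermitian)
    (X : V → ℝ) (hXnonneg : ∀ u, 0 ≤ X u) (hXunit : X ⬝ᵥ X = 1)
    (hEig : (Aalpha G α).mulVec X = (⨆ i, hGh.eigenvalues i) • X)
    (hxw : X v ≤ X w) :
    (⨆ i, hGh.eigenvalues i) < ⨆ i, hHh.eigenvalues i := by
  haveI : Nonempty V := ⟨v⟩
  obtain ⟨hα0, hα1⟩ := hα
  set ρ : ℝ := ⨆ i, hGh.eigenvalues i with hρ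
  -- basic facts about S
  have hvS : v ∉ S := fun h => (G.irrefl (hSsub v h).1)
  have hwS : w ∉ S := fun h => (hSsub w h).2.2 rfl
  have hbv : ∀ b ∈ S, b ≠ v := fun b hb h => hvS (h ▸ hb)
  have hpos : ∀ u, 0 < X u := perron_pos G α hα1 hconn X hXnonneg hXunit ρ hEig
  have hρX : X ⬝ᵥ (Aalpha G α *ᵥ X) = ρ := by
    rw [hEig, dotProduct_smul, smul_eq_mul, hXunit, mul_one]
  have hEig' : ∀ u, (Aalpha G α *ᵥ X) u = ρ * X u := fun u => by rw [hEig]; rfl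
  -- neighbor finset identities
  have hNv : H.neighborFinset v = G.neighborFinset v \ S := by
    ext b
    simp only [SimpleGraph.mem_neighborFinset, Finset.mem_sdiff]
    rw [hH]
    constructor
    · rintro (⟨h1, h2, h3⟩ | ⟨h1, h2⟩ | ⟨h1, h2⟩)
      · exact ⟨h1, fun hb => h2 ⟨rfl, hb⟩⟩
      · exact absurd h1 hvw
      · exact absurd h2 hvS
    · rintro ⟨h1, h2⟩
      exact Or.inl ⟨h1, fun h => h2 h.2, fun h => hvS h.2⟩
  have hNw : H.neighborFinset w = G.neighborFinset w ∪ S := by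
    ext b
    simp only [SimpleGraph.mem_neighborFinset, Finset.mem_union]
    rw [hH]
    constructor
    · rintro (⟨h1, h2, h3⟩ | ⟨h1, h2⟩ | ⟨h1, h2⟩)
      · exact Or.inl h1
      · exact Or.inr h2
      · exact absurd h2 hwS
    · rintro (h | h)
      · exact Or.inl ⟨h, fun hc => hvw hc.1.symm, fun hc => hwS hc.2⟩
      · exact Or.inr (Or.inl ⟨rfl, h⟩)
  have hNu : ∀ u ∈ S, H.neighborFinset u = insert w ((G.neighborFinset u).erase v) := by
    intro u hu
    have huv : u ≠ v := hbv u hu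
    have huw : u ≠ w := (hSsub u hu).2.2
    ext b
    simp only [SimpleGraph.mem_neighborFinset, Finset.mem_insert, Finset.mem_erase]
    rw [hH]
    constructor
    · rintro (⟨h1, h2, h3⟩ | ⟨h1, h2⟩ | ⟨h1, h2⟩)
      · exact Or.inr ⟨fun hb => h3 ⟨hb, hu⟩, h1⟩
      · exact absurd h1 huw
      · exact Or.inl h1
    · rintro (h | ⟨h1, h2⟩)
      · exact Or.inr (Or.inr ⟨h, hu⟩)
      · exact Or.inl ⟨h2, fun hc => huv hc.1, fun hc => h1 hc.1⟩
  have hNo : ∀ u, u ∉ S → u ≠ v → u ≠ w → H.neighborFinset u = G.neighborFinset u := by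
    intro u hu huv huw
    ext b
    simp only [SimpleGraph.mem_neighborFinset]
    rw [hH]
    constructor
    · rintro (⟨h1, h2, h3⟩ | ⟨h1, h2⟩ | ⟨h1, h2⟩)
      · exact h1
      · exact absurd h1 huw
      · exact absurd h2 hu
    · intro h
      exact Or.inl ⟨h, fun hc => huv hc.1, fun hc => hu hc.2⟩
  -- auxiliary membership facts
  have hSvN : S ⊆ G.neighborFinset v :=
    fun u hu => (SimpleGraph.mem_neighborFinset G v u).mpr (hSsub u hu).1
  have hdisj : Disjoint (G.neighborFinset w) S :=
    Finset.disjoint_left.mpr fun {b} hb hbS =>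
      (hSsub _ hbS).2.1 ((SimpleGraph.mem_neighborFinset G w b).mp hb)
  have hwNu : ∀ u ∈ S, w ∉ G.neighborFinset u := fun u hu h =>
    (hSsub u hu).2.1 (((SimpleGraph.mem_neighborFinset G u w).mp h).symm)
  have hvNu : ∀ u ∈ S, v ∈ G.neighborFinset u := fun u hu =>
    (SimpleGraph.mem_neighborFinset G u v).mpr (hSsub u hu).1.symm
  -- degree identities (over ℝ)
  have hdegv : (H.degree v : ℝ) = (G.degree v : ℝ) - S.card := by
    rw [← SimpleGraph.card_neighborFinset_eq_degree, hNv, Finset.card_sdiff_of_subset hSvN]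
    rw [Nat.cast_sub (Finset.card_le_card hSvN), SimpleGraph.card_neighborFinset_eq_degree]
  have hdegw : (H.degree w : ℝ) = (G.degree w : ℝ) + S.card := by
    rw [← SimpleGraph.card_neighborFinset_eq_degree, hNw, Finset.card_union_of_disjoint hdisj]
    push_cast
    rw [SimpleGraph.card_neighborFinset_eq_degree]
  have hdegu : ∀ u ∈ S, (H.degree u : ℝ) = (G.degree u : ℝ) := by
    intro u hu
    have hn : H.degree u = G.degree u := by
      rw [← SimpleGraph.card_neighborFinset_eq_degree,
        ← SimpleGraph.card_neighborFinset_eq_degree, hNu u hu,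
        Finset.card_insert_of_notMem (fun h => hwNu u hu (Finset.mem_of_mem_erase h)),
        Finset.card_erase_of_mem (hvNu u hu)]
      have : 1 ≤ (G.neighborFinset u).card := Finset.card_pos.mpr ⟨v, hvNu u hu⟩
      omega
    rw [hn]
  set σ : ℝ := ∑ u ∈ S, X u with hσ
  have hσpos : 0 < σ := Finset.sum_pos (fun u _ => hpos u) hS
  -- row differences
  have hRv : (Aalpha H α *ᵥ X) v
      = (Aalpha G α *ᵥ X) v - (α * S.card * X v + (1 - α) * σ) := by
    rw [aalpha_apply, aalpha_apply, hdegv, hNv, Finset.sum_sdiff_eq_sub hSvN, hσ]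
    ring
  have hRw : (Aalpha H α *ᵥ X) w
      = (Aalpha G α *ᵥ X) w + (α * S.card * X w + (1 - α) * σ) := by
    rw [aalpha_apply, aalpha_apply, hdegw, hNw, Finset.sum_union hdisj, hσ]
    ring
  have hRu : ∀ u ∈ S, (Aalpha H α *ᵥ X) u
      = (Aalpha G α *ᵥ X) u + (1 - α) * (X w - X v) := by
    intro u hu
    rw [aalpha_apply, aalpha_apply, hdegu u hu, hNu u hu,
      Finset.sum_insert (fun h => hwNu u hu (Finset.mem_of_mem_erase h)),
      Finset.sum_erase_eq_sub (hvNu u hu)]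
    ring
  have hRo : ∀ u, u ∉ S → u ≠ v → u ≠ w →
      (Aalpha H α *ᵥ X) u = (Aalpha G α *ᵥ X) u := by
    intro u hu huv huw
    have hdeg : H.degree u = G.degree u := by
      rw [← SimpleGraph.card_neighborFinset_eq_degree,
        ← SimpleGraph.card_neighborFinset_eq_degree, hNo u hu huv huw]
    rw [aalpha_apply, aalpha_apply, hdeg, hNo u hu huv huw]
  -- the quadratic form difference
  set Q : ℝ := X ⬝ᵥ (Aalpha H α *ᵥ X) with hQdef
  have hQdiff : Q - ρ
      = α * S.card * (X w ^ 2 - X v ^ 2) + 2 * (1 - α) * (X w - X v) * σ := by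
    have hsplit : Q - ρ = ∑ u, X u * ((Aalpha H α *ᵥ X) u - (Aalpha G α *ᵥ X) u) := by
      rw [hQdef, ← hρX, dotProduct, dotProduct, ← Finset.sum_sub_distrib]
      exact Finset.sum_congr rfl fun u _ => by ring
    set T : Finset V := insert v (insert w S) with hT
    have hvT : v ∉ insert w S := by
      simp only [Finset.mem_insert]
      rintro (h | h)
      · exact hvw h
      · exact hvS h
    have hzero : ∀ u ∈ Finset.univ, u ∉ T →
        X u * ((Aalpha H α *ᵥ X) u - (Aalpha G α *ᵥ X) u) = 0 := by
      intro u _ hu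
      simp only [hT, Finset.mem_insert] at hu
      push_neg at hu
      rw [hRo u hu.2.2 hu.1 hu.2.1]
      ring
    rw [hsplit, ← Finset.sum_subset (Finset.subset_univ T) hzero, hT,
      Finset.sum_insert hvT, Finset.sum_insert hwS]
    have hSsum : ∑ u ∈ S, X u * ((Aalpha H α *ᵥ X) u - (Aalpha G α *ᵥ X) u)
        = σ * ((1 - α) * (X w - X v)) := by
      rw [hσ, Finset.sum_mul]
      exact Finset.sum_congr rfl fun u hu => by rw [hRu u hu]; ring
    rw [hSsum, hRv, hRw]
    ring
  have hQge : ρ ≤ Q := by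
    have h1 : (0:ℝ) ≤ X w ^ 2 - X v ^ 2 := by
      nlinarith [hpos v, (hpos v).le, hxw]
    have h2 : (0:ℝ) ≤ α * S.card := mul_nonneg hα0 (Nat.cast_nonneg _)
    nlinarith [mul_nonneg h2 h1,
      mul_nonneg (mul_nonneg (by linarith : (0:ℝ) ≤ 2 * (1 - α))
        (sub_nonneg.mpr hxw)) hσpos.le]
  -- the key strict inequality at w
  set c : ℝ := (Aalpha H α *ᵥ X) w with hc
  set δ : ℝ := c - ρ * X w with hδ
  have hδpos : 0 < δ := by
    have := hEig' w
    have h1 : (0:ℝ) ≤ α * S.card * X w :=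
      mul_nonneg (mul_nonneg hα0 (Nat.cast_nonneg _)) (hpos w).le
    have h2 : (0:ℝ) < (1 - α) * σ := mul_pos (by linarith) hσpos
    have h3 : δ = α * S.card * X w + (1 - α) * σ := by
      rw [hδ, hRw, this]; ring
    rw [h3]
    linarith
  -- perturbation of X at w
  set d : ℝ := Aalpha H α w w with hd
  have habs : (0:ℝ) < 1 + |d - ρ| := by positivity
  set t : ℝ := min 1 (δ / (1 + |d - ρ|)) with ht
  have ht0 : 0 < t := lt_min one_pos (div_pos hδpos habs)
  have ht1 : t * (1 + |d - ρ|) ≤ δ := by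
    have h := min_le_right 1 (δ / (1 + |d - ρ|))
    calc t * (1 + |d - ρ|) ≤ (δ / (1 + |d - ρ|)) * (1 + |d - ρ|) :=
          mul_le_mul_of_nonneg_right h habs.le
      _ = δ := div_mul_cancel₀ _ (ne_of_gt habs)
  clear_value ρ σ Q c δ d t
  set e : V → ℝ := Pi.single w 1 with he
  set Y : V → ℝ := X + t • e with hY
  have hsymm : (Aalpha H α)ᵀ = Aalpha H α := by
    rw [← conjTranspose_eq_transpose_of_trivial]; exact hHh
  have hsym : ∀ z : V → ℝ, z ᵥ* Aalpha H α = Aalpha H α *ᵥ z := by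
    intro z
    rw [← mulVec_transpose, hsymm]
  have hMe : X ⬝ᵥ (Aalpha H α *ᵥ e) = c := by
    rw [dotProduct_mulVec, hsym X, he, dotProduct_single, mul_one, hc]
  have heMX : e ⬝ᵥ (Aalpha H α *ᵥ X) = c := by
    rw [he, single_dotProduct, one_mul, hc]
  have heMe : e ⬝ᵥ (Aalpha H α *ᵥ e) = d := by
    rw [he, single_dotProduct, one_mul, mulVec_single]
    show Aalpha H α w w * 1 = d
    rw [mul_one, hd]
  have heX : e ⬝ᵥ X = X w := by rw [he, single_dotProduct, one_mul]
  have hXe : X ⬝ᵥ e = X w := by rw [he, dotProduct_single, mul_one]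
  have hee : e ⬝ᵥ e = 1 := by rw [he, single_dotProduct, one_mul, Pi.single_eq_same]
  have hYY : Y ⬝ᵥ Y = 1 + 2 * t * X w + t ^ 2 := by
    rw [hY, dotProduct_add, add_dotProduct, add_dotProduct, dotProduct_smul,
      smul_dotProduct, smul_dotProduct, dotProduct_smul, hXunit, heX, hXe, hee]
    simp only [smul_eq_mul]
    ring
  have hYMY : Y ⬝ᵥ (Aalpha H α *ᵥ Y) = Q + 2 * t * c + t ^ 2 * d := by
    rw [hY, mulVec_add, mulVec_smul, dotProduct_add, add_dotProduct, add_dotProduct,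
      dotProduct_smul, dotProduct_smul, smul_dotProduct, smul_dotProduct,
      ← hQdef, hMe, heMX, heMe]
    simp only [smul_eq_mul]
    ring
  have hfinal : ρ * (Y ⬝ᵥ Y) < Y ⬝ᵥ (Aalpha H α *ᵥ Y) := by
    rw [hYY, hYMY]
    exact perturb_ineq ρ Q c δ d t (X w) hQge hδ hδpos ht0 ht1
  have hYYpos : 0 < Y ⬝ᵥ Y := by
    rw [hYY]
    exact yy_pos t (X w) ht0 (hpos w)
  have hray := rayleigh_le hHh Y
  exact (mul_lt_mul_iff_of_pos_right hYYpos).mp (lt_of_lt_of_le hfinal hray)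
end
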